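/- Let x₀ ∈ ℝⁿ with support I = supp(x₀), and consider J = ‖·‖₁. For any h ∈ ℝⁿ, the directional derivative of ‖·‖₁ at x₀ in direction h equals Σ_{i∈I} sign(x₀ᵢ) hᵢ + Σ_{i∉I} |hᵢ|. Consequently the critical cone is C̃_{‖·‖₁}(x₀) = {h : Σ_{i∈I} sign(x₀ᵢ) hᵢ + Σ_{i∉I} |hᵢ| ≤ 0}, and x₀ (feasible for Ax = b₀) is a sharp solution of min{‖x‖₁ : Ax = b₀} if and only if Σ_{i∈I} sign(x₀ᵢ) hᵢ + Σ_{i∉I} |hᵢ| > 0 for all h ∈ Ker A \ {0}. -/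

import Mathlib

open Set Filter
open scoped Topology Classical

private noncomputable def phi {n : ℕ} (x₀ : EuclideanSpace ℝ (Fin n)) (I : Finset (Fin n))
    (h : EuclideanSpace ℝ (Fin n)) : ℝ :=
  ∑ i ∈ I, Real.sign (x₀ i) * h i + ∑ i ∈ Iᶜ, |h i|

private lemma rsign_mul_self (a : ℝ) (ha : a ≠ 0) : Real.sign a * a = |a| := by
  rcases lt_trichotomy a 0 with h|h|h
  · rw [Real.sign_of_neg h, abs_of_neg h]; ring
  · exact absurd h ha
  · rw [Real.sign_of_pos h, abs_of_pos h]; ring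

private lemma rsign_mul_le (a b : ℝ) (ha : a ≠ 0) :
    Real.sign a * b ≤ |a + b| - |a| := by
  have h2 := rsign_mul_self a ha
  rcases lt_trichotomy a 0 with h|h|h
  · rw [Real.sign_of_neg h] at h2 ⊢
    have := neg_abs_le (a + b); nlinarith
  · exact absurd h ha
  · rw [Real.sign_of_pos h] at h2 ⊢
    have := le_abs_self (a + b); nlinarith

private lemma phi_cont {n : ℕ} (x₀ : EuclideanSpace ℝ (Fin n)) (I : Finset (Fin n)) :
    Continuous (phi x₀ I) := by
  unfold phi
  exact (continuous_finset_sum _ fun i _ => continuous_const.mul (PiLp.continuous_apply (p := 2) (β := fun _ : Fin n => ℝ) i)).add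
    (continuous_finset_sum _ fun i _ => (PiLp.continuous_apply (p := 2) (β := fun _ : Fin n => ℝ) i).abs)

private lemma phi_smul {n : ℕ} (x₀ : EuclideanSpace ℝ (Fin n)) (I : Finset (Fin n))
    (c : ℝ) (hc : 0 ≤ c) (h : EuclideanSpace ℝ (Fin n)) :
    phi x₀ I (c • h) = c * phi x₀ I h := by
  unfold phi
  simp only [PiLp.smul_apply, smul_eq_mul, abs_mul, abs_of_nonneg hc]
  rw [mul_add, Finset.mul_sum, Finset.mul_sum]
  congr 1
  exact Finset.sum_congr rfl fun i _ => by ring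

private lemma key_ineq {n : ℕ} (x₀ : EuclideanSpace ℝ (Fin n)) (I : Finset (Fin n))
    (hI : I = Finset.univ.filter (fun i => x₀ i ≠ 0)) (h : EuclideanSpace ℝ (Fin n)) :
    phi x₀ I h ≤ (∑ i, |(x₀ + h) i|) - ∑ i, |x₀ i| := by
  have hmem : ∀ i, i ∈ I ↔ x₀ i ≠ 0 := by intro i; rw [hI]; simp
  have hsplit : ∀ f : Fin n → ℝ, ∑ i, f i = ∑ i ∈ I, f i + ∑ i ∈ Iᶜ, f i :=
    fun f => (Finset.sum_add_sum_compl I f).symm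
  rw [hsplit (fun i => |(x₀ + h) i|), hsplit (fun i => |x₀ i|)]
  have h1 : ∑ i ∈ I, Real.sign (x₀ i) * h i ≤ ∑ i ∈ I, (|(x₀ + h) i| - |x₀ i|) := by
    refine Finset.sum_le_sum fun i hi => ?_
    have : (x₀ + h) i = x₀ i + h i := rfl
    rw [this]
    exact rsign_mul_le _ _ ((hmem i).mp hi)
  have h2 : ∑ i ∈ Iᶜ, |h i| = ∑ i ∈ Iᶜ, (|(x₀ + h) i| - |x₀ i|) := by
    refine Finset.sum_congr rfl fun i hi => ?_
    have hz : x₀ i = 0 := by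
      by_contra hne
      exact (Finset.mem_compl.mp hi) ((hmem i).mpr hne)
    have : (x₀ + h) i = x₀ i + h i := rfl
    rw [this, hz]; simp
  rw [Finset.sum_sub_distrib] at h1
  rw [Finset.sum_sub_distrib] at h2
  unfold phi
  linarith

private lemma key_eq {n : ℕ} (x₀ : EuclideanSpace ℝ (Fin n)) (I : Finset (Fin n))
    (hI : I = Finset.univ.filter (fun i => x₀ i ≠ 0)) (h : EuclideanSpace ℝ (Fin n))
    (t : ℝ) (ht : 0 < t) (hsmall : ∀ i ∈ I, t * |h i| < |x₀ i|) :
    (∑ i, |(x₀ + t • h) i|) - ∑ i, |x₀ i| = t * phi x₀ I h := by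
  have hmem : ∀ i, i ∈ I ↔ x₀ i ≠ 0 := by intro i; rw [hI]; simp
  have hsplit : ∀ f : Fin n → ℝ, ∑ i, f i = ∑ i ∈ I, f i + ∑ i ∈ Iᶜ, f i :=
    fun f => (Finset.sum_add_sum_compl I f).symm
  rw [hsplit (fun i => |(x₀ + t • h) i|), hsplit (fun i => |x₀ i|)]
  have h1 : ∑ i ∈ I, |(x₀ + t • h) i| = ∑ i ∈ I, (|x₀ i| + t * (Real.sign (x₀ i) * h i)) := by
    refine Finset.sum_congr rfl fun i hi => ?_
    have happ : (x₀ + t • h) i = x₀ i + t * h i := rfl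
    have hne := (hmem i).mp hi
    have hsm := hsmall i hi
    rw [happ]
    rcases lt_trichotomy (x₀ i) 0 with hc|hc|hc
    · rw [Real.sign_of_neg hc, abs_of_neg hc] at *
      have hb : |t * h i| < -x₀ i := by rwa [abs_mul, abs_of_pos ht]
      rw [abs_of_neg (by cases abs_lt.mp hb; linarith)]
      ring
    · exact absurd hc hne
    · rw [Real.sign_of_pos hc, abs_of_pos hc] at *
      have hb : |t * h i| < x₀ i := by rwa [abs_mul, abs_of_pos ht]
      rw [abs_of_pos (by cases abs_lt.mp hb; linarith)]
      ring
  have h2 : ∑ i ∈ Iᶜ, |(x₀ + t • h) i| = ∑ i ∈ Iᶜ, (|x₀ i| + t * |h i|) := by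
    refine Finset.sum_congr rfl fun i hi => ?_
    have hz : x₀ i = 0 := by
      by_contra hne
      exact (Finset.mem_compl.mp hi) ((hmem i).mpr hne)
    have happ : (x₀ + t • h) i = x₀ i + t * h i := rfl
    rw [happ, hz]
    simp [abs_mul, abs_of_pos ht]
  rw [h1, h2, Finset.sum_add_distrib, Finset.sum_add_distrib]
  unfold phi
  rw [mul_add, Finset.mul_sum, Finset.mul_sum]
  ring

/-- For `J = ‖·‖₁` and `I = supp x₀`: the directional derivative of
`‖·‖₁` at `x₀` in direction `h` is `Σ_{i∈I} sign(x₀ᵢ) hᵢ + Σ_{i∉I} |hᵢ|`; consequently a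
feasible `x₀` is a sharp solution of `min {‖x‖₁ : Ax = b₀}` iff this quantity is positive
for every `h ∈ Ker A \ {0}`. -/
theorem l1_directional_derivative_and_sharp_solution
    (n m : ℕ)
    (l1 : EuclideanSpace ℝ (Fin n) → ℝ) (hl1 : ∀ x, l1 x = ∑ i, |x i|)
    (A : EuclideanSpace ℝ (Fin n) →L[ℝ] EuclideanSpace ℝ (Fin m))
    (b₀ : EuclideanSpace ℝ (Fin m))
    (x₀ : EuclideanSpace ℝ (Fin n)) (hfeas : A x₀ = b₀)
    (I : Finset (Fin n)) (hI : I = Finset.univ.filter (fun i => x₀ i ≠ 0)) :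
    (∀ h : EuclideanSpace ℝ (Fin n),
      Tendsto (fun t : ℝ => (l1 (x₀ + t • h) - l1 x₀) / t) (𝓝[>] (0 : ℝ))
        (𝓝 (∑ i ∈ I, Real.sign (x₀ i) * h i + ∑ i ∈ Iᶜ, |h i|))) ∧
    ((∃ κ > (0 : ℝ), ∃ δ > (0 : ℝ), ∀ x, A x = b₀ → ‖x - x₀‖ ≤ δ →
        κ * ‖x - x₀‖ ≤ l1 x - l1 x₀) ↔
      (∀ h : EuclideanSpace ℝ (Fin n), A h = 0 → h ≠ 0 →
        0 < ∑ i ∈ I, Real.sign (x₀ i) * h i + ∑ i ∈ Iᶜ, |h i|)) := by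
  have part1 : ∀ h : EuclideanSpace ℝ (Fin n),
      Tendsto (fun t : ℝ => (l1 (x₀ + t • h) - l1 x₀) / t) (𝓝[>] (0 : ℝ))
        (𝓝 (phi x₀ I h)) := by
    intro h
    have hev : ∀ᶠ t in 𝓝[>] (0:ℝ), ∀ i ∈ I, t * |h i| < |x₀ i| := by
      rw [eventually_all_finset]
      intro i hi
      have hne : x₀ i ≠ 0 := by rw [hI] at hi; simpa using hi
      have htend : Tendsto (fun t : ℝ => t * |h i|) (𝓝[>] (0:ℝ)) (𝓝 0) := by
        have : Tendsto (fun t : ℝ => t * |h i|) (𝓝 0) (𝓝 (0 * |h i|)) :=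
          (continuous_id.mul continuous_const).tendsto 0
        simpa using this.mono_left nhdsWithin_le_nhds
      exact htend.eventually_lt_const (abs_pos.mpr hne)
    have heq : (fun _ : ℝ => phi x₀ I h) =ᶠ[𝓝[>] (0:ℝ)]
        (fun t : ℝ => (l1 (x₀ + t • h) - l1 x₀) / t) := by
      filter_upwards [hev, self_mem_nhdsWithin] with t hsm ht
      have ht0 : (0:ℝ) < t := ht
      rw [hl1, hl1, key_eq x₀ I hI h t ht0 hsm, mul_comm, mul_div_assoc,
        div_self (ne_of_gt ht0), mul_one]
    exact Tendsto.congr' heq tendsto_const_nhds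
  refine ⟨fun h => part1 h, ?_, ?_⟩
  · -- sharp → positivity on kernel
    rintro ⟨κ, hκ, δ, hδ, hs⟩ h hA0 hne
    have hnorm : 0 < ‖h‖ := norm_pos_iff.mpr hne
    have hev : ∀ᶠ t in 𝓝[>] (0:ℝ), κ * ‖h‖ ≤ (l1 (x₀ + t • h) - l1 x₀) / t := by
      have hmem : Set.Ioo (0:ℝ) (δ / ‖h‖) ∈ 𝓝[>] (0:ℝ) :=
        Ioo_mem_nhdsGT_of_mem (by constructor <;> [exact le_refl 0; exact div_pos hδ hnorm])
      filter_upwards [hmem] with t ht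
      obtain ⟨ht0, htδ⟩ := ht
      have hfeas' : A (x₀ + t • h) = b₀ := by
        rw [map_add, map_smul, hA0, smul_zero, add_zero, hfeas]
      have hcancel : (x₀ + t • h) - x₀ = t • h := by abel
      have hdist : ‖(x₀ + t • h) - x₀‖ ≤ δ := by
        rw [hcancel, norm_smul, Real.norm_eq_abs, abs_of_pos ht0]
        exact le_of_lt ((lt_div_iff₀ hnorm).mp htδ)
      have := hs _ hfeas' hdist
      rw [hcancel, norm_smul, Real.norm_eq_abs, abs_of_pos ht0] at this
      rw [le_div_iff₀ ht0]
      calc κ * ‖h‖ * t = κ * (t * ‖h‖) := by ring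
        _ ≤ l1 (x₀ + t • h) - l1 x₀ := this
    have hle : κ * ‖h‖ ≤ phi x₀ I h := ge_of_tendsto (part1 h) hev
    exact lt_of_lt_of_le (mul_pos hκ hnorm) hle
  · -- positivity on kernel → sharp
    intro hpos
    by_cases hker : ∀ v : EuclideanSpace ℝ (Fin n), A v = 0 → v = 0
    · refine ⟨1, one_pos, 1, one_pos, fun x hx _ => ?_⟩
      have hv : x - x₀ = 0 := hker _ (by rw [map_sub, hx, hfeas, sub_self])
      have hxx : x = x₀ := sub_eq_zero.mp hv
      simp [hxx]
    · push_neg at hker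
      obtain ⟨h₀, hA0, hne0⟩ := hker
      set S : Set (EuclideanSpace ℝ (Fin n)) := {v | A v = 0 ∧ ‖v‖ = 1} with hS
      have hScl : S = (A ⁻¹' {0}) ∩ Metric.sphere 0 1 := by
        ext v; simp [hS, mem_sphere_zero_iff_norm]
      have hScompact : IsCompact S := by
        rw [hScl]
        exact (isCompact_sphere 0 1).inter_left (isClosed_singleton.preimage A.continuous)
      have hu₀ : (‖h₀‖⁻¹ • h₀) ∈ S :=
        ⟨by rw [map_smul, hA0, smul_zero], norm_smul_inv_norm hne0⟩
      obtain ⟨u, huS, hmin⟩ := hScompact.exists_isMinOn ⟨_, hu₀⟩ (phi_cont x₀ I).continuousOn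
      have huker : A u = 0 := huS.1
      have hunorm : ‖u‖ = 1 := huS.2
      have hune : u ≠ 0 := by intro hz; rw [hz, norm_zero] at hunorm; norm_num at hunorm
      have hκ : 0 < phi x₀ I u := hpos u huker hune
      refine ⟨phi x₀ I u, hκ, 1, one_pos, fun x hx _ => ?_⟩
      set d := x - x₀ with hd
      have hAd : A d = 0 := by rw [hd, map_sub, hx, hfeas, sub_self]
      by_cases hdz : d = 0
      · have hxx : x = x₀ := sub_eq_zero.mp hdz
        rw [hxx, sub_self, hdz, norm_zero, mul_zero]
      · have hdn : 0 < ‖d‖ := norm_pos_iff.mpr hdz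
        have hu' : (‖d‖⁻¹ • d) ∈ S :=
          ⟨by rw [map_smul, hAd, smul_zero], norm_smul_inv_norm hdz⟩
        have hge : phi x₀ I u ≤ phi x₀ I (‖d‖⁻¹ • d) := hmin hu'
        have hrepr : d = ‖d‖ • (‖d‖⁻¹ • d) := by
          rw [smul_smul, mul_inv_cancel₀ (ne_of_gt hdn), one_smul]
        have hphid : phi x₀ I d = ‖d‖ * phi x₀ I (‖d‖⁻¹ • d) := by
          conv_lhs => rw [hrepr]
          exact phi_smul x₀ I _ (norm_nonneg d) _
        have h1 : phi x₀ I u * ‖d‖ ≤ phi x₀ I d := by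
          rw [hphid]
          calc phi x₀ I u * ‖d‖ = ‖d‖ * phi x₀ I u := by ring
            _ ≤ ‖d‖ * phi x₀ I (‖d‖⁻¹ • d) :=
              mul_le_mul_of_nonneg_left hge (norm_nonneg d)
        have h2 : phi x₀ I d ≤ l1 x - l1 x₀ := by
          have := key_ineq x₀ I hI d
          rw [hl1, hl1]
          have hxd : x₀ + d = x := by rw [hd]; abel
          rwa [hxd] at this
        calc phi x₀ I u * ‖x - x₀‖ = phi x₀ I u * ‖d‖ := by rw [hd]
          _ ≤ phi x₀ I d := h1
          _ ≤ l1 x - l1 x₀ := h2
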